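/- For a fixed channel c : X → D(Y) and multiset ψ of size K ≥ 1 on Y, a distribution ω on X maximizes the Jeffrey likelihood Multinomial[K](c≫ω)(ψ) over all distributions on X if and only if it minimizes the KL divergence D_KL(flrn(ψ), c≫ω). -/

import Mathlib

open Finset

noncomputable def validity {X : Type*} [Fintype X] (ω p : X → ℝ) : ℝ := ∑ x, ω x * p x
noncomputable def updateD {X : Type*} [Fintype X] (ω p : X → ℝ) : X → ℝ :=
  fun x => ω x * p x / validity ω p
noncomputable def push {X Y : Type*} [Fintype X] (c : X → Y → ℝ) (ω : X → ℝ) : Y → ℝ :=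
  fun y => ∑ x, ω x * c x y
noncomputable def pull {X Y : Type*} [Fintype Y] (c : X → Y → ℝ) (q : Y → ℝ) : X → ℝ :=
  fun x => ∑ y, c x y * q y
noncomputable def dagger {X Y : Type*} [Fintype X] (c : X → Y → ℝ) (ω : X → ℝ) : Y → X → ℝ :=
  fun y x => ω x * c x y / push c ω y

def IsDist {X : Type*} [Fintype X] (ω : X → ℝ) : Prop :=
  (∀ x, 0 ≤ ω x) ∧ ∑ x, ω x = 1
def IsChannel {X Y : Type*} [Fintype Y] (c : X → Y → ℝ) : Prop :=
  ∀ x, IsDist (c x)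
def IsPred {X : Type*} (p : X → ℝ) : Prop := ∀ x, 0 ≤ p x ∧ p x ≤ 1

noncomputable def coefm {X : Type*} [Fintype X] [DecidableEq X] (K : ℕ) (φ : Sym X K) : ℝ :=
  (K.factorial : ℝ) / ∏ x, (((φ : Multiset X).count x).factorial : ℝ)
noncomputable def multinom {X : Type*} [Fintype X] [DecidableEq X] (K : ℕ) (ω : X → ℝ)
    (φ : Sym X K) : ℝ :=
  coefm K φ * ∏ x, ω x ^ ((φ : Multiset X).count x)
noncomputable def flrn {X : Type*} [DecidableEq X] (K : ℕ) (φ : Sym X K) : X → ℝ :=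
  fun x => ((φ : Multiset X).count x : ℝ) / K
def acc {X : Type*} {K : ℕ} (v : Fin K → X) : Sym X K :=
  ⟨Multiset.map v Finset.univ.val, by simp⟩
noncomputable def arr {X : Type*} [Fintype X] [DecidableEq X] {K : ℕ} (φ : Sym X K) :
    (Fin K → X) → ℝ :=
  fun v => if acc v = φ then 1 / coefm K φ else 0
noncomputable def Mchan {X Y : Type*} [Fintype X] [DecidableEq X] [Fintype Y] [DecidableEq Y]
    {K : ℕ} (c : X → Y → ℝ) : Sym X K → Sym Y K → ℝ :=
  fun φ ψ => ∑ v : Fin K → X, arr φ v *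
    ∑ w : Fin K → Y, (∏ i, c (v i) (w i)) * (if acc w = ψ then 1 else 0)
open Classical in
noncomputable def klE {Z : Type*} [Fintype Z] (ω ρ : Z → ℝ) : EReal :=
  if ∀ z, ω z ≠ 0 → ρ z ≠ 0 then ((∑ z, ω z * Real.log (ω z / ρ z) : ℝ) : EReal) else ⊤

section Aux

variable {Y : Type*} [Fintype Y] [DecidableEq Y]

lemma flrn_ne_zero_iff (K : ℕ) (hK : 1 ≤ K) (ψ : Sym Y K) (y : Y) :
    flrn K ψ y ≠ 0 ↔ (ψ : Multiset Y).count y ≠ 0 := by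
  have hK' : (K : ℝ) ≠ 0 := Nat.cast_ne_zero.2 (by omega)
  simp [flrn, div_eq_zero_iff, hK']

lemma key_iff (K : ℕ) (hK : 1 ≤ K) (ψ : Sym Y K) (σ τ : Y → ℝ)
    (hσ0 : ∀ y, 0 ≤ σ y) (hτ0 : ∀ y, 0 ≤ τ y) :
    (∏ y, τ y ^ ((ψ : Multiset Y).count y) ≤ ∏ y, σ y ^ ((ψ : Multiset Y).count y)) ↔
      klE (flrn K ψ) σ ≤ klE (flrn K ψ) τ := by
  set n : Y → ℕ := fun y => (ψ : Multiset Y).count y with hn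
  have hK' : (0 : ℝ) < K := by exact_mod_cast (by omega : 0 < K)
  -- positivity of the product under the support condition
  have hMpos : ∀ ρ : Y → ℝ, (∀ y, 0 ≤ ρ y) → (∀ y, n y ≠ 0 → ρ y ≠ 0) →
      0 < ∏ y, ρ y ^ n y := by
    intro ρ h0 h
    refine Finset.prod_pos fun y _ => ?_
    by_cases hy : n y = 0
    · simp [hy]
    · exact pow_pos (lt_of_le_of_ne (h0 y) (Ne.symm (h y hy))) _
  have hMzero : ∀ ρ : Y → ℝ, ¬ (∀ y, n y ≠ 0 → ρ y ≠ 0) → (∏ y, ρ y ^ n y) = 0 := by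
    intro ρ h
    push_neg at h
    obtain ⟨y, hy1, hy2⟩ := h
    exact Finset.prod_eq_zero (Finset.mem_univ y) (by simp [hy2, zero_pow hy1])
  have hMnonneg : ∀ ρ : Y → ℝ, (∀ y, 0 ≤ ρ y) → 0 ≤ ∏ y, ρ y ^ n y := fun ρ h0 =>
    Finset.prod_nonneg fun y _ => pow_nonneg (h0 y) _
  -- the log of the product
  have hlog : ∀ ρ : Y → ℝ, (∀ y, n y ≠ 0 → ρ y ≠ 0) →
      Real.log (∏ y, ρ y ^ n y) = ∑ y, (n y : ℝ) * Real.log (ρ y) := by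
    intro ρ h
    rw [Real.log_prod]
    · exact Finset.sum_congr rfl fun y _ => Real.log_pow _ _
    · intro y _
      by_cases hy : n y = 0
      · simp [hy]
      · exact pow_ne_zero _ (h y hy)
  -- the KL sum decomposition
  have hsum : ∀ ρ : Y → ℝ, (∀ y, n y ≠ 0 → ρ y ≠ 0) →
      (∑ y, flrn K ψ y * Real.log (flrn K ψ y / ρ y))
        = (∑ y, flrn K ψ y * Real.log (flrn K ψ y))
          - (1 / K) * ∑ y, (n y : ℝ) * Real.log (ρ y) := by
    intro ρ h
    rw [Finset.mul_sum, ← Finset.sum_sub_distrib]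
    refine Finset.sum_congr rfl fun y _ => ?_
    by_cases hy : n y = 0
    · have h0 : (ψ : Multiset Y).count y = 0 := hy
      simp [flrn, h0, hy]
    · have hf : flrn K ψ y ≠ 0 := (flrn_ne_zero_iff K hK ψ y).2 hy
      rw [Real.log_div hf (h y hy), mul_sub]
      have : flrn K ψ y = (n y : ℝ) / K := rfl
      rw [this]
      ring
  -- the support condition in terms of flrn
  have hcond : ∀ ρ : Y → ℝ, (∀ y, flrn K ψ y ≠ 0 → ρ y ≠ 0) ↔ (∀ y, n y ≠ 0 → ρ y ≠ 0) := by
    intro ρ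
    constructor
    · intro h y hy; exact h y ((flrn_ne_zero_iff K hK ψ y).2 hy)
    · intro h y hy; exact h y ((flrn_ne_zero_iff K hK ψ y).1 hy)
  by_cases hPσ : ∀ y, flrn K ψ y ≠ 0 → σ y ≠ 0
  · by_cases hPτ : ∀ y, flrn K ψ y ≠ 0 → τ y ≠ 0
    · -- both finite
      unfold klE
      rw [if_pos hPσ, if_pos hPτ, EReal.coe_le_coe_iff,
        hsum σ ((hcond σ).1 hPσ), hsum τ ((hcond τ).1 hPτ)]
      have hMσ := hMpos σ hσ0 ((hcond σ).1 hPσ)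
      have hMτ := hMpos τ hτ0 ((hcond τ).1 hPτ)
      rw [← Real.log_le_log_iff hMτ hMσ, hlog σ ((hcond σ).1 hPσ), hlog τ ((hcond τ).1 hPτ)]
      constructor
      · intro h
        have := mul_le_mul_of_nonneg_left h (le_of_lt (by positivity : (0:ℝ) < 1 / K))
        linarith
      · intro h
        have h' : (1 / (K:ℝ)) * ∑ y, (n y : ℝ) * Real.log (τ y)
            ≤ (1 / (K:ℝ)) * ∑ y, (n y : ℝ) * Real.log (σ y) := by linarith
        have hKpos : (0:ℝ) < 1 / K := by positivity
        exact le_of_mul_le_mul_left h' hKpos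
    · -- τ degenerate: RHS is ≤ ⊤, LHS: prod τ = 0
      unfold klE
      rw [if_pos hPσ, if_neg hPτ]
      simp only [le_top, iff_true]
      rw [hMzero τ (fun h => hPτ ((hcond τ).2 h))]
      exact hMnonneg σ hσ0
  · -- σ degenerate
    unfold klE
    rw [if_neg hPσ]
    rw [hMzero σ (fun h => hPσ ((hcond σ).2 h))]
    by_cases hPτ : ∀ y, flrn K ψ y ≠ 0 → τ y ≠ 0
    · rw [if_pos hPτ]
      constructor
      · intro h
        exact absurd (lt_of_lt_of_le (hMpos τ hτ0 ((hcond τ).1 hPτ)) h) (lt_irrefl 0)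
      · intro h
        exact absurd (top_le_iff.1 h) (EReal.coe_ne_top _)
    · rw [if_neg hPτ]
      simp only [le_refl, iff_true]
      rw [hMzero τ (fun h => hPτ ((hcond τ).2 h))]

end Aux

theorem stmt9 {X Y : Type*} [Fintype X] [Fintype Y] [DecidableEq Y] (K : ℕ) (hK : 1 ≤ K)
    (c : X → Y → ℝ) (hc : IsChannel c) (ψ : Sym Y K)
    (ω : X → ℝ) (hω : IsDist ω) :
    (∀ ω' : X → ℝ, IsDist ω' → multinom K (push c ω') ψ ≤ multinom K (push c ω) ψ)
    ↔ (∀ ω' : X → ℝ, IsDist ω' → klE (flrn K ψ) (push c ω) ≤ klE (flrn K ψ) (push c ω')) := by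
  classical
  have hco : 0 < coefm K ψ := by
    unfold coefm
    apply div_pos
    · exact_mod_cast K.factorial_pos
    · exact Finset.prod_pos fun y _ => by exact_mod_cast Nat.factorial_pos _
  have hpush : ∀ ω' : X → ℝ, IsDist ω' → ∀ y, 0 ≤ push c ω' y := fun ω' h y =>
    Finset.sum_nonneg fun x _ => mul_nonneg (h.1 x) ((hc x).1 y)
  have main : ∀ ω₁ ω₂ : X → ℝ, IsDist ω₁ → IsDist ω₂ →
      (multinom K (push c ω₂) ψ ≤ multinom K (push c ω₁) ψ ↔
        klE (flrn K ψ) (push c ω₁) ≤ klE (flrn K ψ) (push c ω₂)) := by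
    intro ω₁ ω₂ h1 h2
    rw [← key_iff K hK ψ _ _ (hpush ω₁ h1) (hpush ω₂ h2)]
    unfold multinom
    exact mul_le_mul_iff_right₀ hco
  constructor
  · intro h ω' hω'
    exact (main ω ω' hω hω').1 (h ω' hω')
  · intro h ω' hω'
    exact (main ω ω' hω hω').2 (h ω' hω')
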